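/- Let G be a finite simple graph on n vertices and let k ≥ 1. Let C(1,...,k)_n denote the set of ℕ-weighted complete graphs on n vertices obtained as Σ_{i=1}^{k-1} (I(K_n \ e)^{*∞} ∪ {I(K_n)}) + I(K_n). Then the set I(G) * C(1,...,k)_n equals the set of all weighted complete graphs obtained by assigning each edge of G a value in {1,...,k} and each non-edge of G the value 0. -/

import Mathlib

/-- `ℕ`-weightings of the complete graph on `n` vertices. -/
abbrev Wt (n : ℕ) := Fin n → Fin n → ℕ

/-- The `*`-product of two families of weighted complete graphs. -/
def fmul {n : ℕ} (A B : Set (Wt n)) : Set (Wt n) :=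
  {w | ∃ H ∈ A, ∃ K ∈ B, ∃ f : Fin n ≃ Fin n, w = fun a b => H a b * K (f a) (f b)}

/-- `fpow A m` is the `(m+1)`-fold `*`-power `A^{*(m+1)}`. -/
def fpow {n : ℕ} (A : Set (Wt n)) : ℕ → Set (Wt n)
  | 0 => A
  | m + 1 => fmul (fpow A m) A

/-- Edge-wise addition of families of weighted complete graphs. -/
def fadd {n : ℕ} (A B : Set (Wt n)) : Set (Wt n) :=
  {w | ∃ a ∈ A, ∃ b ∈ B, w = fun x y => a x y + b x y}

/-- `I(K_n)`: weight `1` on every edge. -/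
def onesW (n : ℕ) : Wt n := fun a b => if a = b then 0 else 1

/-- `I(K_n \ e)` where `e = {u,v}`. -/
def KminusE {n : ℕ} (u v : Fin n) : Wt n :=
  fun a b => if a ≠ b ∧ ¬((a = u ∧ b = v) ∨ (a = v ∧ b = u)) then 1 else 0

/-- `Cfam u v m j` is `∑_{i=1}^{j} (I(K_n \ e)^{*∞} ∪ {I(K_n)}) + I(K_n)`, the family
`C(1,…,j+1)_n`, where `I(K_n \ e)^{*∞}` is realized by the stabilized power `fpow _ m`. -/
def Cfam {n : ℕ} (u v : Fin n) (m : ℕ) : ℕ → Set (Wt n)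
  | 0 => {onesW n}
  | j + 1 => fadd (Cfam u v m j) (fpow {KminusE u v} m ∪ {onesW n})

section Aux

variable {n : ℕ}

lemma exists_perm {x y u v : Fin n} (hxy : x ≠ y) (huv : u ≠ v) :
    ∃ f : Fin n ≃ Fin n, f x = u ∧ f y = v := by
  set g := Equiv.swap u x with hg
  have hgx : g x = u := Equiv.swap_apply_right u x
  have hgy : g y ≠ u := by
    rw [← hgx]; exact g.injective.ne (Ne.symm hxy)
  refine ⟨g.trans (Equiv.swap v (g y)), ?_, ?_⟩
  · simp only [Equiv.trans_apply, hgx]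
    exact Equiv.swap_apply_of_ne_of_ne huv (Ne.symm hgy)
  · simp only [Equiv.trans_apply]
    exact Equiv.swap_apply_right v (g y)

lemma KminusE_comp {x y u v : Fin n} (f : Fin n ≃ Fin n) (hx : f x = u) (hy : f y = v)
    (a b : Fin n) : KminusE u v (f a) (f b) = KminusE x y a b := by
  subst hx; subst hy
  simp only [KminusE, ne_eq, EmbeddingLike.apply_eq_iff_eq]

lemma KminusE_mem_fpow (u v : Fin n) : ∀ j, KminusE u v ∈ fpow {KminusE u v} j
  | 0 => rfl
  | j + 1 => ⟨KminusE u v, KminusE_mem_fpow u v j, KminusE u v, rfl, Equiv.refl _, by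
      funext a b
      simp only [Equiv.refl_apply, KminusE]
      split <;> simp <;> tauto⟩

/-- the set of symmetric 0/1 weightings with zero diagonal -/
def Tset (n : ℕ) : Set (Wt n) :=
  {w | (∀ a, w a a = 0) ∧ (∀ a b, w a b = w b a) ∧ ∀ a b, w a b ≤ 1}

lemma KminusE_mem_T (u v : Fin n) : KminusE u v ∈ Tset n := by
  refine ⟨fun a => by simp [KminusE], fun a b => ?_, fun a b => by
    unfold KminusE; split <;> simp⟩
  simp only [KminusE]
  refine if_congr ?_ rfl rfl
  constructor
  · rintro ⟨h1, h2⟩; exact ⟨Ne.symm h1, by tauto⟩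
  · rintro ⟨h1, h2⟩; exact ⟨Ne.symm h1, by tauto⟩

lemma onesW_mem_T : onesW n ∈ Tset n :=
  ⟨fun a => by simp [onesW], fun a b => by
    simp only [onesW]; exact if_congr eq_comm rfl rfl, fun a b => by
    unfold onesW; split <;> simp⟩

lemma fpow_subset_T (u v : Fin n) : ∀ j, fpow {KminusE u v} j ⊆ Tset n
  | 0 => by
      rintro w hw
      have hw' : w = KminusE u v := hw
      subst hw'
      exact KminusE_mem_T u v
  | j + 1 => by
      rintro w ⟨H, hH, K, hK, f, rfl⟩
      have hK' : K = KminusE u v := hK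
      subst hK'
      have hT := fpow_subset_T u v j hH
      have hKT := KminusE_mem_T u v
      refine ⟨fun a => ?_, fun a b => ?_, fun a b => ?_⟩
      · show H a a * KminusE u v (f a) (f a) = 0
        rw [hT.1 a, zero_mul]
      · show H a b * KminusE u v (f a) (f b) = H b a * KminusE u v (f b) (f a)
        rw [hT.2.1 a b, hKT.2.1 (f a) (f b)]
      · show H a b * KminusE u v (f a) (f b) ≤ 1
        exact mul_le_one' (hT.2.2 a b) (hKT.2.2 _ _)

lemma mul_KminusE_mem {u v : Fin n} (huv : u ≠ v) {m : ℕ}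
    (hstab : fpow {KminusE u v} (m + 1) = fpow {KminusE u v} m)
    {w : Wt n} (hw : w ∈ fpow {KminusE u v} m) {x y : Fin n} (hxy : x ≠ y) :
    (fun a b => w a b * KminusE x y a b) ∈ fpow {KminusE u v} m := by
  rw [← hstab]
  obtain ⟨f, hx, hy⟩ := exists_perm hxy huv
  exact ⟨w, hw, KminusE u v, rfl, f, by
    funext a b; rw [KminusE_comp f hx hy]⟩

lemma indicator_mem {u v : Fin n} (huv : u ≠ v) {m : ℕ}
    (hstab : fpow {KminusE u v} (m + 1) = fpow {KminusE u v} m)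
    (Z : Finset (Fin n × Fin n)) :
    (fun a b => KminusE u v a b * (if (a, b) ∈ Z ∨ (b, a) ∈ Z then 0 else 1))
      ∈ fpow {KminusE u v} m := by
  classical
  induction Z using Finset.induction_on with
  | empty => simpa using KminusE_mem_fpow u v m
  | @insert p Z hp ih =>
    by_cases hpd : p.1 = p.2
    · have heq : (fun a b => KminusE u v a b *
          (if (a, b) ∈ insert p Z ∨ (b, a) ∈ insert p Z then 0 else 1)) =
          (fun a b => KminusE u v a b * (if (a, b) ∈ Z ∨ (b, a) ∈ Z then 0 else 1)) := by
        funext a b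
        by_cases hab : a = b
        · subst hab; simp [KminusE]
        · have hab1 : (a, b) ≠ p := fun h => hab (by subst h; exact hpd)
          have hab2 : (b, a) ≠ p := fun h => hab (by subst h; exact hpd.symm)
          simp [Finset.mem_insert, hab1, hab2]
      rw [heq]; exact ih
    · have hmem := mul_KminusE_mem huv hstab ih hpd
      have heq : (fun a b => KminusE u v a b *
          (if (a, b) ∈ insert p Z ∨ (b, a) ∈ insert p Z then 0 else 1)) =
          (fun a b => (KminusE u v a b * (if (a, b) ∈ Z ∨ (b, a) ∈ Z then 0 else 1)) *
            KminusE p.1 p.2 a b) := by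
        funext a b
        by_cases hab : a = b
        · subst hab; simp [KminusE]
        · have hins : ((a, b) ∈ insert p Z ∨ (b, a) ∈ insert p Z) ↔
              (((a, b) ∈ Z ∨ (b, a) ∈ Z) ∨
                ((a = p.1 ∧ b = p.2) ∨ (a = p.2 ∧ b = p.1))) := by
            simp only [Finset.mem_insert, Prod.ext_iff]; tauto
          rw [if_congr hins rfl rfl]
          by_cases h1 : (a, b) ∈ Z ∨ (b, a) ∈ Z <;>
            by_cases h2 : (a = p.1 ∧ b = p.2) ∨ (a = p.2 ∧ b = p.1) <;>
            simp [KminusE, hab, h1, h2]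
      rw [heq]; exact hmem

lemma mem_fpow_of_T {u v : Fin n} (huv : u ≠ v) {m : ℕ}
    (hstab : fpow {KminusE u v} (m + 1) = fpow {KminusE u v} m)
    {w : Wt n} (hw : w ∈ Tset n) (huv0 : w u v = 0) : w ∈ fpow {KminusE u v} m := by
  classical
  have hvu0 : w v u = 0 := by rw [hw.2.1 v u]; exact huv0
  have hmem := indicator_mem huv hstab
    (Finset.univ.filter (fun p : Fin n × Fin n => w p.1 p.2 = 0))
  have heq : w = (fun a b => KminusE u v a b *
      (if (a, b) ∈ Finset.univ.filter (fun p : Fin n × Fin n => w p.1 p.2 = 0) ∨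
        (b, a) ∈ Finset.univ.filter (fun p : Fin n × Fin n => w p.1 p.2 = 0)
        then 0 else 1)) := by
    funext a b
    by_cases hab : a = b
    · subst hab; simp [KminusE, hw.1 a]
    · by_cases h0 : w a b = 0
      · simp [Finset.mem_filter, h0, hab]
      · have h1 : w a b = 1 := le_antisymm (hw.2.2 a b) (Nat.one_le_iff_ne_zero.mpr h0)
        have hne1 : ¬(a = u ∧ b = v) := by rintro ⟨rfl, rfl⟩; exact h0 huv0
        have hne2 : ¬(a = v ∧ b = u) := by rintro ⟨rfl, rfl⟩; exact h0 hvu0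
        have hba : ¬ w b a = 0 := by rw [hw.2.1 b a]; exact h0
        simp [KminusE, Finset.mem_filter, hab, hne1, hne2, h0, hba, h1]
  rw [heq]; exact hmem

/-- the intended description of `Cfam _ _ _ j` (upper bounds only) -/
def Dset (n j : ℕ) : Set (Wt n) :=
  {w | (∀ a, w a a = 0) ∧ (∀ a b, w a b = w b a) ∧
    ∀ a b, a ≠ b → 1 ≤ w a b ∧ w a b ≤ j + 1}

lemma Cfam_subset_D (u v : Fin n) (m : ℕ) : ∀ j, Cfam u v m j ⊆ Dset n j
  | 0 => by
      rintro w hw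
      have hw' : w = onesW n := hw
      subst hw'
      exact ⟨onesW_mem_T.1, onesW_mem_T.2.1, fun a b hab => by simp [onesW, hab]⟩
  | j + 1 => by
      rintro w ⟨c, hc, t, ht, rfl⟩
      have hcD := Cfam_subset_D u v m j hc
      have htT : t ∈ Tset n := by
        rcases ht with ht | ht
        · exact fpow_subset_T u v m ht
        · rw [Set.mem_singleton_iff] at ht; subst ht; exact onesW_mem_T
      refine ⟨fun a => ?_, fun a b => ?_, fun a b hab => ?_⟩
      · show c a a + t a a = 0
        rw [hcD.1 a, htT.1 a]
      · show c a b + t a b = c b a + t b a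
        rw [hcD.2.1 a b, htT.2.1 a b]
      · show 1 ≤ c a b + t a b ∧ c a b + t a b ≤ j + 1 + 1
        have h1 := hcD.2.2 a b hab
        have h2 := htT.2.2 a b
        omega

lemma mem_Cfam {u v : Fin n} (huv : u ≠ v) {m : ℕ}
    (hstab : fpow {KminusE u v} (m + 1) = fpow {KminusE u v} m) (j : ℕ) :
    ∀ c : Wt n, (∀ a, c a a = 0) → (∀ a b, c a b = c b a) →
      (∀ a b, a ≠ b → 1 ≤ c a b ∧ c a b ≤ j + 1) →
      (∀ a b, a ≠ b → c u v ≤ c a b) → c ∈ Cfam u v m j := by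
  induction j with
  | zero =>
    intro c hd hs hb _
    have : c = onesW n := by
      funext a b
      by_cases hab : a = b
      · subst hab; simp [onesW, hd a]
      · have := hb a b hab; simp only [onesW, if_neg hab]; omega
    rw [this]; exact rfl
  | succ j ih =>
    intro c hd hs hb hmin
    have hbuv := hb u v huv
    by_cases h2 : 2 ≤ c u v
    · refine ⟨fun a b => c a b - onesW n a b, ?_, onesW n, Or.inr rfl, ?_⟩
      · apply ih
        · intro a; rw [hd a]; simp [onesW]
        · intro a b; rw [hs a b, onesW_mem_T.2.1 a b]
        · intro a b hab
          have := hb a b hab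
          have := hmin a b hab
          simp only [onesW, if_neg hab]
          omega
        · intro a b hab
          have := hmin a b hab
          have := hb a b hab
          simp only [onesW, if_neg huv, if_neg hab]
          omega
      · funext a b
        by_cases hab : a = b
        · subst hab; simp [onesW, hd a]
        · have := hb a b hab
          simp only [onesW, if_neg hab]
          omega
    · obtain ⟨t, ht⟩ : ∃ t : Wt n,
          t = fun a b => if a ≠ b ∧ c a b = j + 2 then 1 else 0 := ⟨_, rfl⟩
      have htT : t ∈ Tset n := by
        refine ⟨fun a => by simp [ht], fun a b => ?_, fun a b => by
          rw [ht]; dsimp only; split <;> simp⟩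
        rw [ht]; dsimp only
        refine if_congr ?_ rfl rfl
        rw [hs a b]
        constructor
        · rintro ⟨h1, h2⟩; exact ⟨Ne.symm h1, h2⟩
        · rintro ⟨h1, h2⟩; exact ⟨Ne.symm h1, h2⟩
      have htuv : t u v = 0 := by
        rw [ht]; dsimp only
        rw [if_neg]; rintro ⟨_, hc2⟩; omega
      have ht01 : ∀ a b : Fin n, a ≠ b →
          (t a b = 1 ∧ c a b = j + 2) ∨ (t a b = 0 ∧ c a b ≠ j + 2) := by
        intro a b hab
        rw [ht]; dsimp only
        by_cases hc2 : c a b = j + 2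
        · left; exact ⟨if_pos ⟨hab, hc2⟩, hc2⟩
        · right; exact ⟨if_neg (by tauto), hc2⟩
      refine ⟨fun a b => c a b - t a b, ?_, t,
        Or.inl (mem_fpow_of_T huv hstab htT htuv), ?_⟩
      · apply ih
        · intro a
          show c a a - t a a = 0
          rw [hd a, htT.1 a]
        · intro a b
          show c a b - t a b = c b a - t b a
          rw [hs a b, htT.2.1 a b]
        · intro a b hab
          show 1 ≤ c a b - t a b ∧ c a b - t a b ≤ j + 1
          have h1 := hb a b hab
          have h4 := ht01 a b hab
          omega
        · intro a b hab
          show c u v - t u v ≤ c a b - t a b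
          have h1 := hb a b hab
          have h4 := ht01 a b hab
          rw [htuv]
          omega
      · funext a b
        show c a b = (c a b - t a b) + t a b
        by_cases hab : a = b
        · subst hab; rw [hd a, htT.1 a]
        · have h1 := hb a b hab
          have h4 := ht01 a b hab
          omega

end Aux

/-- `I(G) * C(1,…,k)_n` is exactly the set of all (possibly non-proper) `k`-colorings of
`G`: each edge of `G` gets a value in `{1,…,k}` and each non-edge gets `0`. -/
theorem IG_mul_C_eq_colorings {n : ℕ} (hn : 2 ≤ n) (k : ℕ) (hk : 1 ≤ k)
    (u v : Fin n) (huv : u ≠ v) (m : ℕ)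
    (hstab : fpow {KminusE u v} (m + 1) = fpow {KminusE u v} m)
    (G : SimpleGraph (Fin n)) [DecidableRel G.Adj] :
    fmul {fun a b => if G.Adj a b then 1 else 0} (Cfam u v m (k - 1)) =
      {w : Wt n | (∀ a b, w a b = w b a) ∧
        (∀ a b, G.Adj a b → w a b ∈ Finset.Icc 1 k) ∧
        ∀ a b, ¬ G.Adj a b → w a b = 0} := by
  classical
  have hk1 : k - 1 + 1 = k := Nat.succ_pred_eq_of_pos hk
  ext w
  constructor
  · rintro ⟨H, hH, c, hc, f, rfl⟩
    rw [Set.mem_singleton_iff] at hH; subst hH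
    have hcD := Cfam_subset_D u v m (k - 1) hc
    refine ⟨fun a b => ?_, fun a b hab => ?_, fun a b hab => ?_⟩
    · show (if G.Adj a b then 1 else 0) * c (f a) (f b)
        = (if G.Adj b a then 1 else 0) * c (f b) (f a)
      rw [hcD.2.1 (f a) (f b), if_congr (G.adj_comm a b) rfl rfl]
    · show (if G.Adj a b then 1 else 0) * c (f a) (f b) ∈ Finset.Icc 1 k
      have hne : a ≠ b := hab.ne
      have := hcD.2.2 (f a) (f b) (f.injective.ne hne)
      rw [if_pos hab, one_mul, Finset.mem_Icc]
      omega
    · show (if G.Adj a b then 1 else 0) * c (f a) (f b) = 0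
      rw [if_neg hab, zero_mul]
  · rintro ⟨hsym, hedge, hnon⟩
    by_cases hG : ∃ p q, G.Adj p q
    · obtain ⟨p0, q0, hpq0⟩ := hG
      obtain ⟨pq, hpqmem, hpqmin⟩ := Finset.exists_min_image
        (Finset.univ.filter (fun r : Fin n × Fin n => G.Adj r.1 r.2))
        (fun r => w r.1 r.2) ⟨(p0, q0), by simp [hpq0]⟩
      have hpq : G.Adj pq.1 pq.2 := (Finset.mem_filter.mp hpqmem).2
      obtain ⟨f, hfp, hfq⟩ := exists_perm hpq.ne huv
      have hfsu : f.symm u = pq.1 := by rw [← hfp, Equiv.symm_apply_apply]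
      have hfsv : f.symm v = pq.2 := by rw [← hfq, Equiv.symm_apply_apply]
      set c : Wt n := fun x y => if x = y then 0 else
        if G.Adj (f.symm x) (f.symm y) then w (f.symm x) (f.symm y) else w pq.1 pq.2
        with hcdef
      have hwpq := hedge pq.1 pq.2 hpq
      rw [Finset.mem_Icc] at hwpq
      have hcuv : c u v = w pq.1 pq.2 := by
        rw [hcdef]; dsimp only
        rw [if_neg huv, hfsu, hfsv, if_pos hpq]
      refine ⟨_, rfl, c, ?_, f, ?_⟩
      · apply mem_Cfam huv hstab
        · intro a; simp [hcdef]
        · intro a b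
          rw [hcdef]; dsimp only
          by_cases hab : a = b
          · rw [if_pos hab, if_pos hab.symm]
          · rw [if_neg hab, if_neg (Ne.symm hab),
              if_congr (G.adj_comm (f.symm a) (f.symm b)) rfl rfl,
              hsym (f.symm a) (f.symm b)]
        · intro a b hab
          rw [hcdef]; dsimp only
          rw [if_neg hab]
          by_cases hadj : G.Adj (f.symm a) (f.symm b)
          · rw [if_pos hadj]
            have := hedge _ _ hadj
            rw [Finset.mem_Icc] at this
            omega
          · rw [if_neg hadj]
            omega
        · intro a b hab
          rw [hcuv, hcdef]; dsimp only
          rw [if_neg hab]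
          by_cases hadj : G.Adj (f.symm a) (f.symm b)
          · rw [if_pos hadj]
            exact hpqmin (f.symm a, f.symm b) (by simp [hadj])
          · rw [if_neg hadj]
      · funext a b
        show w a b = (if G.Adj a b then 1 else 0) * c (f a) (f b)
        by_cases h : G.Adj a b
        · have hne : a ≠ b := h.ne
          rw [if_pos h, one_mul, hcdef]; dsimp only
          rw [if_neg (f.injective.ne hne), Equiv.symm_apply_apply,
            Equiv.symm_apply_apply, if_pos h]
        · rw [if_neg h, zero_mul]
          exact hnon a b h
    · push_neg at hG
      refine ⟨_, rfl, fun x y => if x = y then 0 else k, ?_, Equiv.refl _, ?_⟩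
      · apply mem_Cfam huv hstab
        · intro a; simp
        · intro a b; exact if_congr eq_comm rfl rfl
        · intro a b hab; rw [if_neg hab]; omega
        · intro a b hab; rw [if_neg hab, if_neg huv]
      · funext a b
        show w a b = (if G.Adj a b then 1 else 0) * _
        rw [if_neg (hG a b), zero_mul]
        exact hnon a b (hG a b)
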